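/- There exist constants C, K₁, K₂ > 0 depending only on b, c, f such that ‖u_{i,j}⁽ⁿ⁾‖_{∞,I} ≤ C n! K₁^{n} i! K₂^{i} for all n, i, j ≥ 0. -/

import Mathlib

noncomputable def uS (b c f : ℝ → ℝ) : ℕ → ℕ → ℝ → ℝ
  | 0, 0 => fun x => f x / c x
  | (i+1), 0 => fun x => -(b x / c x) * deriv (uS b c f i 0) x
  | 0, (_+1) => fun _ => 0
  | 1, (_+1) => fun _ => 0
  | (i+2), (j+1) => fun x =>
      (1 / c x) * (deriv (deriv (uS b c f i j)) x - b x * deriv (uS b c f (i+1) (j+1)) x)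
  termination_by i j => (i, j)

section eqs
variable (b c f : ℝ → ℝ)

lemma uS_eq1 : uS b c f 0 0 = fun x => f x / c x := by rw [uS]
lemma uS_eq2 (i : ℕ) : uS b c f (i+1) 0 = fun x => -(b x / c x) * deriv (uS b c f i 0) x := by
  rw [uS]
lemma uS_eq3 (j : ℕ) : uS b c f 0 (j+1) = fun _ => 0 := by rw [uS]
lemma uS_eq4 (j : ℕ) : uS b c f 1 (j+1) = fun _ => 0 := by rw [uS]
lemma uS_eq5 (i j : ℕ) : uS b c f (i+2) (j+1) = fun x =>
    (1 / c x) * (deriv (deriv (uS b c f i j)) x - b x * deriv (uS b c f (i+1) (j+1)) x) := by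
  rw [uS]

end eqs

namespace Stmt6Aux

lemma fact_mul_fact_le (i : ℕ) : ∀ {m n : ℕ}, m ≤ n →
    n.factorial * (m + i).factorial ≤ (n + i).factorial * m.factorial := by
  induction i with
  | zero => intro m n h; simp [Nat.mul_comm]
  | succ i ih =>
    intro m n h
    have h1 : n.factorial * (m + (i+1)).factorial
        = (m + i + 1) * (n.factorial * (m + i).factorial) := by
      have e : m + (i+1) = (m + i) + 1 := by omega
      rw [e, Nat.factorial_succ]; ring
    have h2 : (n + (i+1)).factorial * m.factorial
        = (n + i + 1) * ((n + i).factorial * m.factorial) := by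
      have e : n + (i+1) = (n + i) + 1 := by omega
      rw [e, Nat.factorial_succ]; ring
    rw [h1, h2]
    exact Nat.mul_le_mul (by omega) (ih h)

lemma choose_fact_le (i : ℕ) {k n : ℕ} (hk : k ≤ n) :
    n.choose k * k.factorial * (n - k + i).factorial ≤ (n + i).factorial := by
  apply Nat.le_of_mul_le_mul_right (c := (n - k).factorial) _ (Nat.factorial_pos _)
  have h1 : n.choose k * k.factorial * (n - k).factorial = n.factorial :=
    Nat.choose_mul_factorial_mul_factorial hk
  calc n.choose k * k.factorial * (n - k + i).factorial * (n - k).factorial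
      = (n.choose k * k.factorial * (n - k).factorial) * (n - k + i).factorial := by ring
    _ = n.factorial * (n - k + i).factorial := by rw [h1]
    _ ≤ (n + i).factorial * (n - k).factorial := fact_mul_fact_le i (Nat.sub_le n k)

lemma add_factorial_le (n i : ℕ) :
    (n + i).factorial ≤ 2 ^ (n + i) * n.factorial * i.factorial := by
  have h1 : (n + i).choose i * i.factorial * n.factorial = (n + i).factorial := by
    have := Nat.choose_mul_factorial_mul_factorial (Nat.le_add_left i n)
    simpa [Nat.add_sub_cancel] using this
  have h2 : (n + i).choose i ≤ 2 ^ (n + i) := by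
    rw [← Nat.sum_range_choose (n + i)]
    exact Finset.single_le_sum (f := fun k => (n + i).choose k)
      (fun k _ => Nat.zero_le _) (Finset.mem_range.mpr (by omega))
  calc (n + i).factorial = (n + i).choose i * i.factorial * n.factorial := h1.symm
    _ ≤ 2 ^ (n + i) * i.factorial * n.factorial := by
        exact Nat.mul_le_mul_right _ (Nat.mul_le_mul_right _ h2)
    _ = 2 ^ (n + i) * n.factorial * i.factorial := by ring

lemma sum_pow_le (n : ℕ) {p K : ℝ} (hp : 0 ≤ p) (hK : 0 < K) (h2 : 2 * p ≤ K) :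
    ∑ k ∈ Finset.range (n+1), p ^ k * K ^ (n - k) ≤ 2 * K ^ n := by
  have hterm : ∀ k ∈ Finset.range (n+1), p ^ k * K ^ (n - k) ≤ K ^ n * (1/2 : ℝ) ^ k := by
    intro k hk
    have hkn : k ≤ n := Nat.lt_succ_iff.mp (Finset.mem_range.mp hk)
    have h1 : p ^ k ≤ (K/2) ^ k := pow_le_pow_left₀ hp (by linarith) k
    have heq : ((K/2 : ℝ)) ^ k * K ^ (n - k) = K ^ n * (1/2 : ℝ) ^ k := by
      have : ((K/2 : ℝ)) ^ k = K ^ k * (1/2 : ℝ) ^ k := by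
        rw [← mul_pow]; ring_nf
      rw [this, mul_comm (K ^ k) _, mul_assoc, ← pow_add]
      rw [Nat.add_sub_cancel' hkn]
      ring
    calc p ^ k * K ^ (n-k) ≤ (K/2) ^ k * K ^ (n-k) :=
          mul_le_mul_of_nonneg_right h1 (by positivity)
      _ = K ^ n * (1/2 : ℝ) ^ k := heq
  calc ∑ k ∈ Finset.range (n+1), p ^ k * K ^ (n - k)
      ≤ ∑ k ∈ Finset.range (n+1), K ^ n * (1/2 : ℝ) ^ k := Finset.sum_le_sum hterm
    _ = K ^ n * ∑ k ∈ Finset.range (n+1), (1/2 : ℝ) ^ k := by rw [Finset.mul_sum]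
    _ ≤ K ^ n * 2 := mul_le_mul_of_nonneg_left (sum_geometric_two_le (n+1)) (by positivity)
    _ = 2 * K ^ n := by ring

lemma sum_pow_pow_le (n : ℕ) {p q : ℝ} (hp : 0 ≤ p) (hq : 0 ≤ q) :
    ∑ k ∈ Finset.range (n+1), p ^ k * q ^ (n - k) ≤ (p + q) ^ n := by
  rw [add_pow]
  apply Finset.sum_le_sum
  intro k hk
  have hkn : k ≤ n := Nat.lt_succ_iff.mp (Finset.mem_range.mp hk)
  have h1 : (1:ℝ) ≤ (n.choose k : ℝ) := by
    exact_mod_cast Nat.succ_le_of_lt (Nat.choose_pos hkn)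
  exact le_mul_of_one_le_right (by positivity) h1

lemma idw_eq {U : Set ℝ} (hU : IsOpen U) {φ : ℝ → ℝ} {x : ℝ} (hx : x ∈ U) (n : ℕ) :
    iteratedDerivWithin n φ U x = iteratedDeriv n φ x := by
  rw [iteratedDerivWithin_eq_iteratedFDerivWithin, iteratedDeriv_eq_iteratedFDeriv,
    iteratedFDerivWithin_of_isOpen n hU hx]

lemma iter_zero_fun (n : ℕ) (x : ℝ) : iteratedDeriv n (fun _ : ℝ => (0:ℝ)) x = 0 := by
  rw [iteratedDeriv_eq_iteratedFDeriv, iteratedFDeriv_zero_fun]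
  simp

lemma iter_one_fun (n : ℕ) (x : ℝ) : iteratedDeriv (n+1) (fun _ : ℝ => (1:ℝ)) x = 0 := by
  rw [iteratedDeriv_succ']
  have : deriv (fun _ : ℝ => (1:ℝ)) = fun _ : ℝ => (0:ℝ) := by
    funext y; exact deriv_const y 1
  rw [this, iter_zero_fun]


lemma pascal_sum (n : ℕ) (a bb : ℕ → ℝ) :
    (∑ k ∈ Finset.range (n+1), (n.choose k : ℝ) * a (k+1) * bb (n-k))
      + ∑ k ∈ Finset.range (n+1), (n.choose k : ℝ) * a k * bb (n-k+1)
    = ∑ k ∈ Finset.range (n+2), ((n+1).choose k : ℝ) * a k * bb (n+1-k) := by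
  rw [Finset.sum_range_succ' (fun k => ((n+1).choose k : ℝ) * a k * bb (n+1-k)) (n+1)]
  have e1 : ∀ k ∈ Finset.range (n+1),
      ((n+1).choose (k+1) : ℝ) * a (k+1) * bb (n+1-(k+1))
      = (n.choose k : ℝ) * a (k+1) * bb (n-k) + (n.choose (k+1) : ℝ) * a (k+1) * bb (n-k) := by
    intro k hk
    have e : n+1-(k+1) = n-k := by omega
    rw [e, Nat.choose_succ_succ]
    push_cast; ring
  rw [Finset.sum_congr rfl e1, Finset.sum_add_distrib]
  have e2 : ∑ k ∈ Finset.range (n+1), (n.choose k : ℝ) * a k * bb (n-k+1)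
      = ∑ k ∈ Finset.range (n+1), (n.choose (k+1) : ℝ) * a (k+1) * bb (n-k)
        + ((n+1).choose 0 : ℝ) * a 0 * bb (n+1-0) := by
    rw [Finset.sum_range_succ' (fun k => (n.choose k : ℝ) * a k * bb (n-k+1)) n]
    have e3 : ∀ k ∈ Finset.range n,
        (n.choose (k+1) : ℝ) * a (k+1) * bb (n-(k+1)+1)
        = (n.choose (k+1) : ℝ) * a (k+1) * bb (n-k) := by
      intro k hk
      have hkn : k < n := Finset.mem_range.mp hk
      have e : n-(k+1)+1 = n-k := by omega
      rw [e]
    rw [Finset.sum_congr rfl e3]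
    have e4 : ∑ k ∈ Finset.range (n+1), (n.choose (k+1) : ℝ) * a (k+1) * bb (n-k)
        = ∑ k ∈ Finset.range n, (n.choose (k+1) : ℝ) * a (k+1) * bb (n-k) := by
      rw [Finset.sum_range_succ]
      simp
    rw [e4]
    norm_num
  rw [e2]
  ring

variable {U : Set ℝ}

lemma iteratedDeriv_add_of (hU : IsOpen U) {φ ψ : ℝ → ℝ} (hφ : AnalyticOnNhd ℝ φ U)
    (hψ : AnalyticOnNhd ℝ ψ U) {x : ℝ} (hx : x ∈ U) (n : ℕ) :
    iteratedDeriv n (fun y => φ y + ψ y) x = iteratedDeriv n φ x + iteratedDeriv n ψ x := by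
  rw [← idw_eq hU hx n, ← idw_eq hU hx n, ← idw_eq hU hx n]
  exact iteratedDerivWithin_add hx hU.uniqueDiffOn
    (hφ.contDiffOn hU.uniqueDiffOn x hx) (hψ.contDiffOn hU.uniqueDiffOn x hx)

lemma iteratedDeriv_sub_of (hU : IsOpen U) {φ ψ : ℝ → ℝ} (hφ : AnalyticOnNhd ℝ φ U)
    (hψ : AnalyticOnNhd ℝ ψ U) {x : ℝ} (hx : x ∈ U) (n : ℕ) :
    iteratedDeriv n (fun y => φ y - ψ y) x = iteratedDeriv n φ x - iteratedDeriv n ψ x := by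
  rw [← idw_eq hU hx n, ← idw_eq hU hx n, ← idw_eq hU hx n]
  exact iteratedDerivWithin_sub hx hU.uniqueDiffOn
    (hφ.contDiffOn hU.uniqueDiffOn x hx) (hψ.contDiffOn hU.uniqueDiffOn x hx)

lemma leibniz (hU : IsOpen U) : ∀ (n : ℕ) {φ ψ : ℝ → ℝ}, AnalyticOnNhd ℝ φ U →
    AnalyticOnNhd ℝ ψ U → ∀ {x : ℝ}, x ∈ U →
    iteratedDeriv n (fun y => φ y * ψ y) x
      = ∑ k ∈ Finset.range (n+1),
          (n.choose k : ℝ) * iteratedDeriv k φ x * iteratedDeriv (n-k) ψ x := by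
  intro n
  induction n with
  | zero => intro φ ψ hφ hψ x hx; simp
  | succ n IH =>
    intro φ ψ hφ hψ x hx
    have hφ' : AnalyticOnNhd ℝ (deriv φ) U := hφ.deriv
    have hψ' : AnalyticOnNhd ℝ (deriv ψ) U := hψ.deriv
    have heq : deriv (fun z => φ z * ψ z)
        =ᶠ[nhds x] (fun y => deriv φ y * ψ y + φ y * deriv ψ y) := by
      filter_upwards [hU.mem_nhds hx] with y hy
      exact deriv_mul ((hφ y hy).differentiableAt) ((hψ y hy).differentiableAt)
    rw [iteratedDeriv_succ', heq.iteratedDeriv_eq n,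
      iteratedDeriv_add_of hU (hφ'.mul hψ) (hφ.mul hψ') hx n,
      IH hφ' hψ hx, IH hφ hψ' hx]
    have r1 : ∀ k, iteratedDeriv k (deriv φ) x = iteratedDeriv (k+1) φ x := by
      intro k; rw [← iteratedDeriv_succ']
    have r2 : ∀ k, iteratedDeriv k (deriv ψ) x = iteratedDeriv (k+1) ψ x := by
      intro k; rw [← iteratedDeriv_succ']
    simp only [r1, r2]
    exact pascal_sum n (fun k => iteratedDeriv k φ x) (fun k => iteratedDeriv k ψ x)

lemma leibniz_abs_le (hU : IsOpen U) {φ ψ : ℝ → ℝ} (hφ : AnalyticOnNhd ℝ φ U)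
    (hψ : AnalyticOnNhd ℝ ψ U) {x : ℝ} (hx : x ∈ U) (n : ℕ) :
    |iteratedDeriv n (fun y => φ y * ψ y) x|
      ≤ ∑ k ∈ Finset.range (n+1),
          (n.choose k : ℝ) * |iteratedDeriv k φ x| * |iteratedDeriv (n-k) ψ x| := by
  rw [leibniz hU n hφ hψ hx]
  refine (Finset.abs_sum_le_sum_abs _ _).trans (Finset.sum_le_sum fun k hk => ?_)
  rw [abs_mul, abs_mul, Nat.abs_cast]

lemma gevrey_mul (hU : IsOpen U) {φ ψ : ℝ → ℝ} (hφ : AnalyticOnNhd ℝ φ U)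
    (hψ : AnalyticOnNhd ℝ ψ U) {x : ℝ} (hx : x ∈ U) {P p Q q : ℝ}
    (hp : 0 ≤ p) (hq : 0 ≤ q) (hP : 0 ≤ P) (hQ : 0 ≤ Q)
    (hbφ : ∀ k, |iteratedDeriv k φ x| ≤ P * k.factorial * p ^ k)
    (hbψ : ∀ k, |iteratedDeriv k ψ x| ≤ Q * k.factorial * q ^ k) (n : ℕ) :
    |iteratedDeriv n (fun y => φ y * ψ y) x| ≤ P * Q * n.factorial * (p + q) ^ n := by
  refine (leibniz_abs_le hU hφ hψ hx n).trans ?_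
  have key : ∀ k ∈ Finset.range (n+1),
      (n.choose k : ℝ) * |iteratedDeriv k φ x| * |iteratedDeriv (n-k) ψ x|
      ≤ (P * Q * n.factorial) * (p ^ k * q ^ (n-k)) := by
    intro k hk
    have hkn : k ≤ n := Nat.lt_succ_iff.mp (Finset.mem_range.mp hk)
    have hfact : (n.choose k : ℝ) * k.factorial * (n - k).factorial = n.factorial := by
      exact_mod_cast Nat.choose_mul_factorial_mul_factorial hkn
    calc (n.choose k : ℝ) * |iteratedDeriv k φ x| * |iteratedDeriv (n-k) ψ x|
        ≤ (n.choose k : ℝ) * (P * k.factorial * p ^ k)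
            * (Q * (n-k).factorial * q ^ (n-k)) := by
          apply mul_le_mul (mul_le_mul_of_nonneg_left (hbφ k) (by positivity)) (hbψ (n-k))
            (abs_nonneg _) (by positivity)
      _ = (P * Q * ((n.choose k : ℝ) * k.factorial * (n-k).factorial))
            * (p ^ k * q ^ (n-k)) := by ring
      _ = (P * Q * n.factorial) * (p ^ k * q ^ (n-k)) := by rw [hfact]
  calc ∑ k ∈ Finset.range (n+1),
        (n.choose k : ℝ) * |iteratedDeriv k φ x| * |iteratedDeriv (n-k) ψ x|
      ≤ ∑ k ∈ Finset.range (n+1), (P * Q * n.factorial) * (p ^ k * q ^ (n-k)) :=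
        Finset.sum_le_sum key
    _ = (P * Q * n.factorial) * ∑ k ∈ Finset.range (n+1), p ^ k * q ^ (n-k) := by
        rw [Finset.mul_sum]
    _ ≤ (P * Q * n.factorial) * (p + q) ^ n :=
        mul_le_mul_of_nonneg_left (sum_pow_pow_le n hp hq) (by positivity)
    _ = P * Q * n.factorial * (p + q) ^ n := by ring

lemma weighted_mul (hU : IsOpen U) {φ ψ : ℝ → ℝ} (hφ : AnalyticOnNhd ℝ φ U)
    (hψ : AnalyticOnNhd ℝ ψ U) {x : ℝ} (hx : x ∈ U) {P p Q K : ℝ} (i : ℕ)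
    (hp : 0 ≤ p) (hP : 0 ≤ P) (hQ : 0 ≤ Q) (hK : 0 < K) (hpK : 2*p ≤ K)
    (hbφ : ∀ k, |iteratedDeriv k φ x| ≤ P * k.factorial * p ^ k)
    (hbψ : ∀ k, |iteratedDeriv k ψ x| ≤ Q * K ^ k * (k + i).factorial) (n : ℕ) :
    |iteratedDeriv n (fun y => φ y * ψ y) x| ≤ 2 * P * Q * K ^ n * (n + i).factorial := by
  refine (leibniz_abs_le hU hφ hψ hx n).trans ?_
  have key : ∀ k ∈ Finset.range (n+1),
      (n.choose k : ℝ) * |iteratedDeriv k φ x| * |iteratedDeriv (n-k) ψ x|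
      ≤ (P * Q * (n+i).factorial) * (p ^ k * K ^ (n-k)) := by
    intro k hk
    have hkn : k ≤ n := Nat.lt_succ_iff.mp (Finset.mem_range.mp hk)
    have hfact : (n.choose k : ℝ) * k.factorial * (n - k + i).factorial
        ≤ (n+i).factorial := by
      exact_mod_cast choose_fact_le i hkn
    calc (n.choose k : ℝ) * |iteratedDeriv k φ x| * |iteratedDeriv (n-k) ψ x|
        ≤ (n.choose k : ℝ) * (P * k.factorial * p ^ k)
            * (Q * K ^ (n-k) * (n - k + i).factorial) := by
          apply mul_le_mul (mul_le_mul_of_nonneg_left (hbφ k) (by positivity)) (hbψ (n-k))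
            (abs_nonneg _) (by positivity)
      _ = (P * Q * (p ^ k * K ^ (n-k)))
            * ((n.choose k : ℝ) * k.factorial * (n - k + i).factorial) := by ring
      _ ≤ (P * Q * (p ^ k * K ^ (n-k))) * (n+i).factorial :=
          mul_le_mul_of_nonneg_left hfact (by positivity)
      _ = (P * Q * (n+i).factorial) * (p ^ k * K ^ (n-k)) := by ring
  calc ∑ k ∈ Finset.range (n+1),
        (n.choose k : ℝ) * |iteratedDeriv k φ x| * |iteratedDeriv (n-k) ψ x|
      ≤ ∑ k ∈ Finset.range (n+1), (P * Q * (n+i).factorial) * (p ^ k * K ^ (n-k)) :=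
        Finset.sum_le_sum key
    _ = (P * Q * (n+i).factorial) * ∑ k ∈ Finset.range (n+1), p ^ k * K ^ (n-k) := by
        rw [Finset.mul_sum]
    _ ≤ (P * Q * (n+i).factorial) * (2 * K ^ n) :=
        mul_le_mul_of_nonneg_left (sum_pow_le n hp hK hpK) (by positivity)
    _ = 2 * P * Q * K ^ n * (n+i).factorial := by ring

end Stmt6Aux


theorem stmt_6
    (b c f : ℝ → ℝ) (C_b C_c C_f γ_b γ_c γ_f β γ : ℝ)
    (hCb : 0 < C_b) (hCc : 0 < C_c) (hCf : 0 < C_f)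
    (hgb : 0 < γ_b) (hgc : 0 < γ_c) (hgf : 0 < γ_f)
    (hβ : 0 < β) (hγ : 0 < γ)
    (hban : AnalyticOnNhd ℝ b (Set.Icc 0 1))
    (hcan : AnalyticOnNhd ℝ c (Set.Icc 0 1))
    (hfan : AnalyticOnNhd ℝ f (Set.Icc 0 1))
    (hbb : ∀ n : ℕ, ∀ x ∈ Set.Icc (0:ℝ) 1, |iteratedDeriv n b x| ≤ C_b * n.factorial * γ_b ^ n)
    (hcb : ∀ n : ℕ, ∀ x ∈ Set.Icc (0:ℝ) 1, |iteratedDeriv n c x| ≤ C_c * n.factorial * γ_c ^ n)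
    (hfb : ∀ n : ℕ, ∀ x ∈ Set.Icc (0:ℝ) 1, |iteratedDeriv n f x| ≤ C_f * n.factorial * γ_f ^ n)
    (hblow : ∀ x ∈ Set.Icc (0:ℝ) 1, β ≤ b x)
    (hclow : ∀ x ∈ Set.Icc (0:ℝ) 1, γ ≤ c x)
 :
    ∃ C K₁ K₂ : ℝ, 0 < C ∧ 0 < K₁ ∧ 0 < K₂ ∧
      ∀ n i j : ℕ, ∀ x ∈ Set.Icc (0:ℝ) 1,
        |iteratedDeriv n (uS b c f i j) x| ≤ C * n.factorial * K₁ ^ n * i.factorial * K₂ ^ i := by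
  classical
  obtain ⟨V, hVdef⟩ : ∃ V : Set ℝ,
      V = {x | AnalyticAt ℝ b x ∧ AnalyticAt ℝ f x ∧ AnalyticAt ℝ c x ∧ c x ≠ 0} := ⟨_, rfl⟩
  have hVmem : ∀ x, x ∈ V ↔
      (AnalyticAt ℝ b x ∧ AnalyticAt ℝ f x ∧ AnalyticAt ℝ c x ∧ c x ≠ 0) := by
    intro x; rw [hVdef]; rfl
  have hVopen : IsOpen V := by
    rw [hVdef, isOpen_iff_mem_nhds]
    rintro x ⟨h1, h2, h3, h4⟩
    have h : ∀ᶠ y in nhds x,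
        AnalyticAt ℝ b y ∧ AnalyticAt ℝ f y ∧ AnalyticAt ℝ c y ∧ c y ≠ 0 := by
      filter_upwards [h1.eventually_analyticAt, h2.eventually_analyticAt,
        h3.eventually_analyticAt, h3.continuousAt.eventually_ne h4] with y hy1 hy2 hy3 hy4
      exact ⟨hy1, hy2, hy3, hy4⟩
    exact h
  have hIV : Set.Icc (0:ℝ) 1 ⊆ V := fun x hx => (hVmem x).mpr
    ⟨hban x hx, hfan x hx, hcan x hx, ne_of_gt (lt_of_lt_of_le hγ (hclow x hx))⟩
  have hbV : AnalyticOnNhd ℝ b V := fun x hx => ((hVmem x).mp hx).1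
  have hfV : AnalyticOnNhd ℝ f V := fun x hx => ((hVmem x).mp hx).2.1
  have hcV : AnalyticOnNhd ℝ c V := fun x hx => ((hVmem x).mp hx).2.2.1
  have hcne : ∀ x ∈ V, c x ≠ 0 := fun x hx => ((hVmem x).mp hx).2.2.2
  obtain ⟨g, hgdef⟩ : ∃ g : ℝ → ℝ, g = fun y => (c y)⁻¹ := ⟨_, rfl⟩
  have hgV : AnalyticOnNhd ℝ g V := by rw [hgdef]; exact hcV.inv hcne
  -- analyticity of all the uS i j on V
  have huA : ∀ i j, AnalyticOnNhd ℝ (uS b c f i j) V := by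
    intro i
    induction i using Nat.strong_induction_on with
    | _ i IH =>
      rcases i with _ | (_ | i)
      · intro j
        rcases j with _ | j
        · rw [uS_eq1]; exact hfV.div hcV hcne
        · rw [uS_eq3]; exact analyticOnNhd_const
      · intro j
        rcases j with _ | j
        · rw [uS_eq2]
          exact ((hbV.div hcV hcne).neg).mul ((IH 0 (by omega) 0).deriv)
        · rw [uS_eq4]; exact analyticOnNhd_const
      · intro j
        rcases j with _ | j
        · rw [uS_eq2]
          exact ((hbV.div hcV hcne).neg).mul ((IH (i+1) (by omega) 0).deriv)
        · rw [uS_eq5]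
          refine (analyticOnNhd_const.div hcV hcne).mul ?_
          exact (((IH i (by omega) j).deriv).deriv).sub
            (hbV.mul ((IH (i+1) (by omega) (j+1)).deriv))
  -- constants
  obtain ⟨D, hDdef⟩ : ∃ D : ℝ, D = γ⁻¹ := ⟨_, rfl⟩
  have hD0 : 0 < D := by rw [hDdef]; positivity
  obtain ⟨δ, hδdef⟩ : ∃ δ : ℝ, δ = 2*γ_c + 2*C_c*γ_c*D := ⟨_, rfl⟩
  have hδ0 : 0 < δ := by rw [hδdef]; positivity
  have hδc : 2*γ_c ≤ δ := by
    have : (0:ℝ) ≤ 2*C_c*γ_c*D := by positivity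
    rw [hδdef]; linarith
  -- derivative bounds for g = 1/c on the interval
  have hgB : ∀ n, ∀ x ∈ Set.Icc (0:ℝ) 1,
      |iteratedDeriv n g x| ≤ D * n.factorial * δ^n := by
    intro n
    induction n using Nat.strong_induction_on with
    | _ n IH =>
      intro x hx
      have hxV := hIV hx
      have hcx : γ ≤ c x := hclow x hx
      have hcx0 : 0 < c x := lt_of_lt_of_le hγ hcx
      rcases n with _ | m
      · simp only [iteratedDeriv_zero, Nat.factorial_zero, pow_zero, Nat.cast_one]
        have h1 : |g x| = (c x)⁻¹ := by
          rw [hgdef]; rw [abs_inv, abs_of_pos hcx0]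
        rw [h1]
        have h2 : (c x)⁻¹ ≤ γ⁻¹ := by
          apply inv_anti₀ hγ hcx
        rw [hDdef]; linarith
      · -- use the Leibniz identity for c * g = 1
        have hone : (fun y => c y * g y) =ᶠ[nhds x] (fun _ => (1:ℝ)) := by
          filter_upwards [hVopen.mem_nhds hxV] with y hy
          rw [hgdef]
          exact mul_inv_cancel₀ (hcne y hy)
        have h0 : (0:ℝ) = ∑ k ∈ Finset.range (m+2),
            ((m+1).choose k : ℝ) * iteratedDeriv k c x * iteratedDeriv (m+1-k) g x := by
          rw [← Stmt6Aux.leibniz hVopen (m+1) hcV hgV hxV, hone.iteratedDeriv_eq,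
            Stmt6Aux.iter_one_fun]
        rw [Finset.sum_range_succ' _ (m+1)] at h0
        simp only [Nat.choose_zero_right, Nat.cast_one, one_mul, iteratedDeriv_zero,
          Nat.sub_zero] at h0
        have hkey : c x * iteratedDeriv (m+1) g x
            = -∑ k ∈ Finset.range (m+1), ((m+1).choose (k+1) : ℝ)
                * iteratedDeriv (k+1) c x * iteratedDeriv (m+1-(k+1)) g x := by
          linarith [h0]
        have hsum : |∑ k ∈ Finset.range (m+1), ((m+1).choose (k+1) : ℝ)
              * iteratedDeriv (k+1) c x * iteratedDeriv (m+1-(k+1)) g x|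
            ≤ 2 * (C_c * D * γ_c * ((m+1).factorial : ℝ)) * δ^m := by
          refine (Finset.abs_sum_le_sum_abs _ _).trans ?_
          have key : ∀ k ∈ Finset.range (m+1),
              |((m+1).choose (k+1) : ℝ) * iteratedDeriv (k+1) c x
                * iteratedDeriv (m+1-(k+1)) g x|
              ≤ (C_c * D * γ_c * ((m+1).factorial : ℝ)) * (γ_c^k * δ^(m-k)) := by
            intro k hk
            have hkm : k ≤ m := Nat.lt_succ_iff.mp (Finset.mem_range.mp hk)
            have e : m + 1 - (k+1) = m - k := by omega
            rw [e, abs_mul, abs_mul, Nat.abs_cast]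
            have h1 := hcb (k+1) x hx
            have h2 := IH (m-k) (by omega) x hx
            have hfact : ((m+1).choose (k+1) : ℝ) * ((k+1).factorial : ℝ)
                * ((m-k).factorial : ℝ) = ((m+1).factorial : ℝ) := by
              have h3 := Nat.choose_mul_factorial_mul_factorial
                (show k+1 ≤ m+1 by omega)
              rw [show m + 1 - (k+1) = m - k from by omega] at h3
              exact_mod_cast h3
            calc ((m+1).choose (k+1):ℝ) * |iteratedDeriv (k+1) c x|
                  * |iteratedDeriv (m-k) g x|
                ≤ ((m+1).choose (k+1):ℝ) * (C_c * ((k+1).factorial : ℝ) * γ_c^(k+1))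
                  * (D * ((m-k).factorial : ℝ) * δ^(m-k)) := by
                  apply mul_le_mul (mul_le_mul_of_nonneg_left h1 (by positivity)) h2
                    (abs_nonneg _) (by positivity)
              _ = (C_c * D * (((m+1).choose (k+1):ℝ) * ((k+1).factorial : ℝ)
                    * ((m-k).factorial : ℝ))) * (γ_c^(k+1) * δ^(m-k)) := by ring
              _ = (C_c * D * ((m+1).factorial : ℝ)) * (γ_c^(k+1) * δ^(m-k)) := by
                  rw [hfact]
              _ = (C_c * D * γ_c * ((m+1).factorial : ℝ)) * (γ_c^k * δ^(m-k)) := by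
                  rw [pow_succ]; ring
          refine (Finset.sum_le_sum key).trans ?_
          rw [← Finset.mul_sum]
          calc (C_c * D * γ_c * ((m+1).factorial : ℝ))
                * ∑ k ∈ Finset.range (m+1), γ_c^k * δ^(m-k)
              ≤ (C_c * D * γ_c * ((m+1).factorial : ℝ)) * (2 * δ^m) := by
                apply mul_le_mul_of_nonneg_left
                  (Stmt6Aux.sum_pow_le m hgc.le hδ0 hδc) (by positivity)
            _ = 2 * (C_c * D * γ_c * ((m+1).factorial : ℝ)) * δ^m := by ring
        have habs : c x * |iteratedDeriv (m+1) g x|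
            ≤ 2 * (C_c * D * γ_c * ((m+1).factorial : ℝ)) * δ^m := by
          have h9 : |c x * iteratedDeriv (m+1) g x|
              = c x * |iteratedDeriv (m+1) g x| := by
            rw [abs_mul, abs_of_pos hcx0]
          calc c x * |iteratedDeriv (m+1) g x|
              = |c x * iteratedDeriv (m+1) g x| := h9.symm
            _ = |∑ k ∈ Finset.range (m+1), ((m+1).choose (k+1) : ℝ)
                  * iteratedDeriv (k+1) c x * iteratedDeriv (m+1-(k+1)) g x| := by
                rw [hkey, abs_neg]
            _ ≤ _ := hsum
        have h2 : γ * |iteratedDeriv (m+1) g x|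
            ≤ 2 * (C_c * D * γ_c * ((m+1).factorial : ℝ)) * δ^m :=
          le_trans (mul_le_mul_of_nonneg_right hcx (abs_nonneg _)) habs
        have hγD : γ * D = 1 := by rw [hDdef]; exact mul_inv_cancel₀ hγ.ne'
        have hδge : 2*C_c*γ_c*D ≤ δ := by
          have : (0:ℝ) ≤ 2*γ_c := by positivity
          rw [hδdef]; linarith
        have h4 : D * (γ * |iteratedDeriv (m+1) g x|)
            ≤ D * (2 * (C_c * D * γ_c * ((m+1).factorial : ℝ)) * δ^m) :=
          mul_le_mul_of_nonneg_left h2 hD0.le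
        have h6 : γ * D * |iteratedDeriv (m+1) g x| = |iteratedDeriv (m+1) g x| := by
          rw [hγD, one_mul]
        have h7 : D * (2 * (C_c * D * γ_c * ((m+1).factorial : ℝ)) * δ^m)
            ≤ D * ((m+1).factorial : ℝ) * δ^m * δ := by
          have h8 : (2*C_c*γ_c*D) * (D * ((m+1).factorial : ℝ) * δ^m)
              ≤ δ * (D * ((m+1).factorial : ℝ) * δ^m) :=
            mul_le_mul_of_nonneg_right hδge (by positivity)
          nlinarith [h8]
        rw [pow_succ]
        nlinarith [h4, h6, h7]
  -- main constants
  obtain ⟨K, hKdef⟩ : ∃ K : ℝ, K = 2*γ_b + 2*δ + γ_f + 1 := ⟨_, rfl⟩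
  have hK0 : 0 < K := by rw [hKdef]; positivity
  obtain ⟨A, hAdef⟩ : ∃ A : ℝ, A = C_f*D + 1 := ⟨_, rfl⟩
  have hA0 : 0 < A := by rw [hAdef]; positivity
  obtain ⟨T, hTdef⟩ : ∃ T : ℝ, T = 1 + 2*D*K^2 + 8*D*C_b*K + 2*C_b*D*K := ⟨_, rfl⟩
  have hT0 : 0 < T := by rw [hTdef]; positivity
  have hT1 : 1 ≤ T := by
    have e1 : (0:ℝ) ≤ 2*D*K^2 := by positivity
    have e2 : (0:ℝ) ≤ 8*D*C_b*K := by positivity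
    have e3 : (0:ℝ) ≤ 2*C_b*D*K := by positivity
    rw [hTdef]; linarith
  have hKb : 2*γ_b ≤ K := by
    have : (0:ℝ) ≤ 2*δ + γ_f + 1 := by positivity
    rw [hKdef]; linarith
  have hKδ : 2*δ ≤ K := by
    have : (0:ℝ) ≤ 2*γ_b + γ_f + 1 := by positivity
    rw [hKdef]; linarith
  have hKbδ : 2*(γ_b + δ) ≤ K := by rw [hKdef]; linarith
  have hKfδ : γ_f + δ ≤ K := by
    have : (0:ℝ) ≤ 2*γ_b + δ + 1 := by linarith
    rw [hKdef]; linarith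
  have hdivbg : (fun y => b y / c y) = fun y => b y * g y := by
    funext y; rw [hgdef, div_eq_mul_inv]
  have hdivfg : (fun y => f y / c y) = fun y => f y * g y := by
    funext y; rw [hgdef, div_eq_mul_inv]
  have hbc_bound : ∀ x ∈ Set.Icc (0:ℝ) 1, ∀ k,
      |iteratedDeriv k (fun y => b y * g y) x| ≤ (C_b*D) * k.factorial * (γ_b+δ)^k :=
    fun x hx k => Stmt6Aux.gevrey_mul hVopen hbV hgV (hIV hx) hgb.le hδ0.le hCb.le hD0.le
      (fun k => hbb k x hx) (fun k => hgB k x hx) k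
  -- the main inductive bound
  have main : ∀ i j n, ∀ x ∈ Set.Icc (0:ℝ) 1,
      |iteratedDeriv n (uS b c f i j) x| ≤ A * T^i * K^n * ((n+i).factorial : ℝ) := by
    intro i
    induction i using Nat.strong_induction_on with
    | _ i IH =>
      rcases i with _ | i
      · intro j n x hx
        rcases j with _ | j
        · rw [uS_eq1, hdivfg]
          have h := Stmt6Aux.gevrey_mul hVopen hfV hgV (hIV hx) hgf.le hδ0.le hCf.le hD0.le
            (fun k => hfb k x hx) (fun k => hgB k x hx) n
          refine h.trans ?_
          have h1 : (γ_f + δ)^n ≤ K^n := pow_le_pow_left₀ (by positivity) hKfδ n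
          have h2 : C_f * D ≤ A := by rw [hAdef]; linarith
          have h3 : C_f * D * (n.factorial : ℝ) * (γ_f+δ)^n
              ≤ A * (n.factorial : ℝ) * K^n := by
            apply mul_le_mul (mul_le_mul_of_nonneg_right h2 (by positivity)) h1
              (by positivity) (by positivity)
          calc C_f * D * (n.factorial : ℝ) * (γ_f+δ)^n
              ≤ A * (n.factorial : ℝ) * K^n := h3
            _ = A * T^0 * K^n * (((n+0).factorial : ℕ) : ℝ) := by
                rw [pow_zero, Nat.add_zero]; ring
        · rw [uS_eq3, Stmt6Aux.iter_zero_fun, abs_zero]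
          positivity
      · intro j n x hx
        have hxV := hIV hx
        rcases j with _ | j
        · -- case (i+1, 0)
          rw [uS_eq2]
          have hφan : AnalyticOnNhd ℝ (fun y => -(b y / c y)) V := (hbV.div hcV hcne).neg
          have hφb : ∀ k, |iteratedDeriv k (fun y => -(b y / c y)) x|
              ≤ (C_b*D) * k.factorial * (γ_b+δ)^k := by
            intro k
            rw [iteratedDeriv_fun_neg, abs_neg, hdivbg]
            exact hbc_bound x hx k
          have hψan : AnalyticOnNhd ℝ (deriv (uS b c f i 0)) V := (huA i 0).deriv
          have hψb : ∀ k, |iteratedDeriv k (deriv (uS b c f i 0)) x|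
              ≤ (A*T^i*K) * K^k * ((k+(i+1)).factorial : ℝ) := by
            intro k
            rw [← iteratedDeriv_succ']
            refine (IH i (by omega) 0 (k+1) x hx).trans (le_of_eq ?_)
            rw [pow_succ, show k+1+i = k+(i+1) from by omega]
            ring
          have h := Stmt6Aux.weighted_mul hVopen hφan hψan hxV (i+1) (by positivity)
            (by positivity) (by positivity) hK0 hKbδ hφb hψb n
          refine h.trans ?_
          have hc2 : 2*C_b*D*K ≤ T := by
            have e1 : (0:ℝ) ≤ 2*D*K^2 := by positivity
            have e2 : (0:ℝ) ≤ 8*D*C_b*K := by positivity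
            rw [hTdef]; linarith
          have hmain : 2*(C_b*D)*(A*T^i*K) ≤ A*T^(i+1) := by
            calc 2*(C_b*D)*(A*T^i*K) = (A*T^i)*(2*C_b*D*K) := by ring
              _ ≤ (A*T^i)*T := mul_le_mul_of_nonneg_left hc2 (by positivity)
              _ = A*T^(i+1) := by ring
          calc 2*(C_b*D)*(A*T^i*K)*K^n*((n+(i+1)).factorial : ℝ)
              ≤ (A*T^(i+1))*K^n*((n+(i+1)).factorial : ℝ) := by
                apply mul_le_mul_of_nonneg_right
                  (mul_le_mul_of_nonneg_right hmain (by positivity)) (by positivity)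
            _ = A*T^(i+1)*K^n*((n+(i+1)).factorial : ℝ) := by ring
        · -- case (i+1, j+1): split i
          rcases i with _ | i
          · rw [uS_eq4, Stmt6Aux.iter_zero_fun, abs_zero]
            positivity
          · -- case (i+2, j+1)
            rw [uS_eq5]
            have hu1 := huA i j
            have hu2 := huA (i+1) (j+1)
            have hψan : AnalyticOnNhd ℝ
                (fun y => deriv (deriv (uS b c f i j)) y
                  - b y * deriv (uS b c f (i+1) (j+1)) y) V :=
              (hu1.deriv.deriv).sub (hbV.mul (hu2.deriv))
            have hE0 : (0:ℝ) < A*T^i*K^2 + 2*C_b*(A*T^(i+1)*K) := by positivity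
            have hψb : ∀ k, |iteratedDeriv k
                (fun y => deriv (deriv (uS b c f i j)) y
                  - b y * deriv (uS b c f (i+1) (j+1)) y) x|
                ≤ (A*T^i*K^2 + 2*C_b*(A*T^(i+1)*K)) * K^k * ((k+(i+2)).factorial : ℝ) := by
              intro k
              rw [Stmt6Aux.iteratedDeriv_sub_of hVopen (hu1.deriv.deriv)
                (hbV.mul (hu2.deriv)) hxV k]
              refine (abs_sub _ _).trans ?_
              have hb1 : |iteratedDeriv k (deriv (deriv (uS b c f i j))) x|
                  ≤ (A*T^i*K^2) * K^k * ((k+(i+2)).factorial : ℝ) := by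
                rw [← iteratedDeriv_succ', ← iteratedDeriv_succ']
                refine (IH i (by omega) j (k+2) x hx).trans (le_of_eq ?_)
                rw [show k+2+i = k+(i+2) from by omega]
                ring
              have hb2an : AnalyticOnNhd ℝ (deriv (uS b c f (i+1) (j+1))) V := hu2.deriv
              have hb2ψ : ∀ m, |iteratedDeriv m (deriv (uS b c f (i+1) (j+1))) x|
                  ≤ (A*T^(i+1)*K) * K^m * ((m+(i+2)).factorial : ℝ) := by
                intro m
                rw [← iteratedDeriv_succ']
                refine (IH (i+1) (by omega) (j+1) (m+1) x hx).trans (le_of_eq ?_)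
                rw [pow_succ, show m+1+(i+1) = m+(i+2) from by omega]
                ring
              have hb2 : |iteratedDeriv k
                  (fun y => b y * deriv (uS b c f (i+1) (j+1)) y) x|
                  ≤ 2*C_b*(A*T^(i+1)*K) * K^k * ((k+(i+2)).factorial : ℝ) :=
                Stmt6Aux.weighted_mul hVopen hbV hb2an hxV (i+2) hgb.le hCb.le
                  (by positivity) hK0 hKb (fun m => hbb m x hx) hb2ψ k
              calc |iteratedDeriv k (deriv (deriv (uS b c f i j))) x|
                    + |iteratedDeriv k (fun y => b y * deriv (uS b c f (i+1) (j+1)) y) x|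
                  ≤ (A*T^i*K^2) * K^k * ((k+(i+2)).factorial : ℝ)
                    + 2*C_b*(A*T^(i+1)*K) * K^k * ((k+(i+2)).factorial : ℝ) := by
                    exact add_le_add hb1 hb2
                _ = (A*T^i*K^2 + 2*C_b*(A*T^(i+1)*K)) * K^k * ((k+(i+2)).factorial : ℝ) := by
                    ring
            have hfe : (fun x => (1 / c x) * (deriv (deriv (uS b c f i j)) x
                - b x * deriv (uS b c f (i+1) (j+1)) x))
                = fun y => g y * (deriv (deriv (uS b c f i j)) y
                  - b y * deriv (uS b c f (i+1) (j+1)) y) := by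
              funext y; rw [hgdef, one_div]
            rw [hfe]
            have houter := Stmt6Aux.weighted_mul hVopen hgV hψan hxV (i+2) hδ0.le hD0.le
              hE0.le hK0 hKδ (fun k => hgB k x hx) hψb n
            refine houter.trans ?_
            have hc3 : 2*D*K^2 + 4*D*C_b*K*T ≤ T^2 := by
              have e2 : T*T = T + 2*D*K^2*T + 8*D*C_b*K*T + 2*C_b*D*K*T := by
                nth_rewrite 1 [hTdef]; ring
              have e1 : 2*D*K^2 ≤ 2*D*K^2*T :=
                le_mul_of_one_le_right (by positivity) hT1
              have e3 : (0:ℝ) ≤ 4*D*C_b*K*T := by positivity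
              have e4 : (0:ℝ) ≤ 2*C_b*D*K*T := by positivity
              have e5 : 8*D*C_b*K*T = 4*D*C_b*K*T + 4*D*C_b*K*T := by ring
              rw [sq]
              linarith
            have hmain : 2*D*(A*T^i*K^2 + 2*C_b*(A*T^(i+1)*K)) ≤ A*T^(i+2) := by
              calc 2*D*(A*T^i*K^2 + 2*C_b*(A*T^(i+1)*K))
                  = (A*T^i)*(2*D*K^2 + 4*D*C_b*K*T) := by ring
                _ ≤ (A*T^i)*T^2 := mul_le_mul_of_nonneg_left hc3 (by positivity)
                _ = A*T^(i+2) := by ring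
            calc 2*D*(A*T^i*K^2 + 2*C_b*(A*T^(i+1)*K))*K^n*((n+(i+2)).factorial : ℝ)
                ≤ (A*T^(i+2))*K^n*((n+(i+2)).factorial : ℝ) := by
                  apply mul_le_mul_of_nonneg_right
                    (mul_le_mul_of_nonneg_right hmain (by positivity)) (by positivity)
              _ = A*T^(i+2)*K^n*((n+(i+2)).factorial : ℝ) := by ring
  -- assemble the final constants
  refine ⟨A, 2*K, 2*T, hA0, by positivity, by positivity, ?_⟩
  intro n i j x hx
  refine (main i j n x hx).trans ?_
  have hfac : (((n+i).factorial : ℕ) : ℝ) ≤ 2^(n+i) * (n.factorial : ℝ) * (i.factorial : ℝ) := by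
    exact_mod_cast Stmt6Aux.add_factorial_le n i
  calc A * T^i * K^n * (((n+i).factorial : ℕ) : ℝ)
      ≤ A * T^i * K^n * (2^(n+i) * (n.factorial : ℝ) * (i.factorial : ℝ)) := by
        apply mul_le_mul_of_nonneg_left hfac (by positivity)
    _ = A * (n.factorial : ℝ) * (2*K)^n * (i.factorial : ℝ) * (2*T)^i := by
        rw [mul_pow, mul_pow, pow_add]
        ring
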